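/- The map sending a rigged configuration (m, J) ∈ RC_B(L, λ) to (m̂, Ĵ) defined by m̂_{2i}^{(a)} = m_i^{(a)}, m̂_j^{(a)} = 0 for odd j, and Ĵ^{(a,2i)} = the partition obtained from J^{(a,i)} by doubling every part, for 1 ≤ a ≤ n−1 and all i ≥ 1, together with m̂_i^{(n)} = m̂_i^{(n+1)} = m_i^{(n)} and Ĵ^{(n,i)} = Ĵ^{(n+1,i)} = J^{(n,i)}, is a bijection from RC_B(L, λ) onto RC^v(L, λ); moreover under this map the cocharge satisfies cc(m̂, Ĵ) = 2·cc(m, J). -/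

import Mathlib

/- STATEMENT 16: the bijection RC_B(L,λ) → RC^v(L,λ) for the embedding B_n ↪ D_{n+1},
   under which the cocharge doubles. -/

namespace Stmt16

/-- A finitely supported matrix `(m_i^{(a)})`, indexed by pairs `(a, i)`. -/
abbrev Mat := ℕ × ℕ →₀ ℕ
/-- A finitely supported matrix of partitions `(J^{(a,i)})`, each partition encoded as the
multiset of its parts. -/
abbrev Rig := ℕ × ℕ →₀ Multiset ℕ

/-- Support is contained in `{1,…,N} × {1,2,3,…}`. -/
def supIn (N : ℕ) (m : Mat) : Prop := ∀ q, m q ≠ 0 → 1 ≤ q.1 ∧ q.1 ≤ N ∧ 1 ≤ q.2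
/-- Support is contained in `{1,…,N} × {1,2,3,…}`. -/
def supInJ (N : ℕ) (J : Rig) : Prop := ∀ q, J q ≠ 0 → 1 ≤ q.1 ∧ q.1 ≤ N ∧ 1 ≤ q.2

/-- The normalized bilinear form `(α_a|α_b)` of type `B_n`. -/
def formB (n a b : ℕ) : ℚ :=
  if a = b then (if a = n then 1 else 2)
  else if a + 1 = b ∨ b + 1 = a then -1
  else 0

/-- The scaling factors `t_a` of type `B_n`. -/
def tB (n a : ℕ) : ℕ := if a = n then 2 else 1

/-- The Cartan integers `A_{ab} = 2(α_a|α_b)/(α_a|α_a)` of type `B_n`. -/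
def cartanB (n a b : ℕ) : ℚ := 2 * formB n a b / formB n a a

/-- The type `B_n` configuration condition for the data `(L, λ)`. -/
def configB (n : ℕ) (lam : ℕ → ℕ) (L m : Mat) : Prop :=
  ∀ a, 1 ≤ a → a ≤ n →
    (m.sum fun q c => (q.2 : ℚ) * c * cartanB n a q.1)
      = (L.sum fun q c => if q.1 = a then (q.2 : ℚ) * c else 0) - lam a

/-- The type `B_n` vacancy numbers `p_i^{(a)}`. -/
def vacB (n : ℕ) (L m : Mat) (a i : ℕ) : ℚ :=
  (L.sum fun q c => if q.1 = a then ((min i q.2 : ℕ) : ℚ) * c else 0)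
  - (m.sum fun q c => formB n a q.1 * ((min (tB n q.1 * i) (tB n a * q.2) : ℕ) : ℚ) * c)

/-- Admissibility in type `B_n`. -/
def admB (n : ℕ) (L m : Mat) : Prop :=
  ∀ a i, 1 ≤ a → a ≤ n → 1 ≤ i → 0 ≤ vacB n L m a i

/-- The rigging conditions in type `B_n`. -/
def rigB (n : ℕ) (L m : Mat) (J : Rig) : Prop :=
  ∀ a i, 1 ≤ a → a ≤ n → 1 ≤ i →
    (J (a,i)).card ≤ m (a,i) ∧ ∀ x ∈ J (a,i), 0 < x ∧ (x : ℚ) ≤ vacB n L m a i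

/-- The quadratic part of the type `B_n` cocharge. -/
def ccB (n : ℕ) (m : Mat) : ℚ :=
  (1/2) * m.sum fun q c => m.sum fun r d =>
    formB n q.1 r.1 * ((min (tB n r.1 * q.2) (tB n q.1 * r.2) : ℕ) : ℚ) * c * d

/-- `Σ_{a,i} |J^{(a,i)}|`. -/
def Jsize (J : Rig) : ℚ := J.sum fun _ ms => (ms.sum : ℚ)

/-- The set of type `B_n` rigged configurations for the data `(L, λ)`. -/
def RCB (n : ℕ) (lam : ℕ → ℕ) (L : Mat) : Set (Mat × Rig) :=
  {p | supIn n p.1 ∧ supInJ n p.2 ∧ configB n lam L p.1 ∧ admB n L p.1 ∧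
       rigB n L p.1 p.2}

/-- The edge relation of the type `D_{n+1}` Dynkin diagram: `a—(a+1)` for `1 ≤ a ≤ n-1`
and the extra edge `(n-1)—(n+1)`. -/
def edgeD (n a b : ℕ) : Prop :=
  (a + 1 = b ∧ b ≤ n) ∨ (b + 1 = a ∧ a ≤ n) ∨ (a = n - 1 ∧ b = n + 1) ∨ (b = n - 1 ∧ a = n + 1)

instance (n a b : ℕ) : Decidable (edgeD n a b) := by unfold edgeD; infer_instance

/-- The bilinear form of type `D_{n+1}` (equal to its Cartan matrix; all scaling
factors are 1). -/
def formD (n a b : ℕ) : ℚ :=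
  if a = b then 2 else if edgeD n a b then -1 else 0

/-- The type `D_{n+1}` configuration condition. -/
def configD (n : ℕ) (lam : ℕ → ℚ) (L m : Mat) : Prop :=
  ∀ a, 1 ≤ a → a ≤ n + 1 →
    (m.sum fun q c => (q.2 : ℚ) * c * formD n a q.1)
      = (L.sum fun q c => if q.1 = a then (q.2 : ℚ) * c else 0) - lam a

/-- The type `D_{n+1}` vacancy numbers. -/
def vacD (n : ℕ) (L m : Mat) (a i : ℕ) : ℚ :=
  (L.sum fun q c => if q.1 = a then ((min i q.2 : ℕ) : ℚ) * c else 0)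
  - (m.sum fun q c => formD n a q.1 * ((min i q.2 : ℕ) : ℚ) * c)

/-- Admissibility in type `D_{n+1}`. -/
def admD (n : ℕ) (L m : Mat) : Prop :=
  ∀ a i, 1 ≤ a → a ≤ n + 1 → 1 ≤ i → 0 ≤ vacD n L m a i

/-- The rigging conditions in type `D_{n+1}`. -/
def rigD (n : ℕ) (L m : Mat) (J : Rig) : Prop :=
  ∀ a i, 1 ≤ a → a ≤ n + 1 → 1 ≤ i →
    (J (a,i)).card ≤ m (a,i) ∧ ∀ x ∈ J (a,i), 0 < x ∧ (x : ℚ) ≤ vacD n L m a i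

/-- The quadratic part of the type `D_{n+1}` cocharge. -/
def ccD (n : ℕ) (m : Mat) : ℚ :=
  (1/2) * m.sum fun q c => m.sum fun r d =>
    formD n q.1 r.1 * ((min q.2 r.2 : ℕ) : ℚ) * c * d

/-- The transform `m ↦ m̂`: `m̂_{2i}^{(a)} = m_i^{(a)}` and `m̂_j^{(a)} = 0` for odd `j`,
for `a ≤ n-1`; `m̂_i^{(n)} = m̂_i^{(n+1)} = m_i^{(n)}`. -/
noncomputable def hatM (n : ℕ) (m : Mat) : Mat :=
  Finsupp.onFinset
    (Finset.range (n+2) ×ˢ Finset.range (2 * (m.support.sup Prod.snd) + 1))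
    (fun q =>
      if 1 ≤ q.1 ∧ q.1 ≤ n - 1 then (if q.2 % 2 = 0 then m (q.1, q.2 / 2) else 0)
      else if q.1 = n ∨ q.1 = n + 1 then m (n, q.2)
      else 0)
    (by
      intro q hq
      obtain ⟨a, i⟩ := q
      simp only [Finset.mem_product, Finset.mem_range]
      dsimp only at hq
      split_ifs at hq with h1 h2 h3
      · have hs : ((a, i / 2) : ℕ × ℕ) ∈ m.support := Finsupp.mem_support_iff.2 hq
        have hle : i / 2 ≤ m.support.sup Prod.snd := Finset.le_sup (f := Prod.snd) hs
        omega
      · exact absurd rfl hq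
      · have hs : ((n, i) : ℕ × ℕ) ∈ m.support := Finsupp.mem_support_iff.2 hq
        have hle : i ≤ m.support.sup Prod.snd := Finset.le_sup (f := Prod.snd) hs
        omega
      · exact absurd rfl hq)

/-- The transform `J ↦ Ĵ`: `Ĵ^{(a,2i)}` is `J^{(a,i)}` with every part doubled, for
`a ≤ n-1`; `Ĵ^{(n,i)} = Ĵ^{(n+1,i)} = J^{(n,i)}`. -/
noncomputable def hatJ (n : ℕ) (J : Rig) : Rig :=
  Finsupp.onFinset
    (Finset.range (n+2) ×ˢ Finset.range (2 * (J.support.sup Prod.snd) + 1))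
    (fun q =>
      if 1 ≤ q.1 ∧ q.1 ≤ n - 1 then
        (if q.2 % 2 = 0 then (J (q.1, q.2 / 2)).map (fun x => 2 * x) else 0)
      else if q.1 = n ∨ q.1 = n + 1 then J (n, q.2)
      else 0)
    (by
      intro q hq
      obtain ⟨a, i⟩ := q
      simp only [Finset.mem_product, Finset.mem_range]
      dsimp only at hq
      split_ifs at hq with h1 h2 h3
      · rw [Ne, Multiset.map_eq_zero] at hq
        have hs : ((a, i / 2) : ℕ × ℕ) ∈ J.support := Finsupp.mem_support_iff.2 hq
        have hle : i / 2 ≤ J.support.sup Prod.snd := Finset.le_sup (f := Prod.snd) hs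
        omega
      · exact absurd rfl hq
      · have hs : ((n, i) : ℕ × ℕ) ∈ J.support := Finsupp.mem_support_iff.2 hq
        have hle : i ≤ J.support.sup Prod.snd := Finset.le_sup (f := Prod.snd) hs
        omega
      · exact absurd rfl hq)

/-- The weight `λ̂`: `λ̂_a = 2λ_a` for `a ≤ n-1`, `λ̂_n = λ̂_{n+1} = λ_n`. -/
def hatLam (n : ℕ) (lam : ℕ → ℕ) (a : ℕ) : ℚ :=
  if 1 ≤ a ∧ a ≤ n - 1 then 2 * lam a
  else if a = n ∨ a = n + 1 then lam n
  else 0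

/-- The set `RC^v(L, λ)` of symmetric type `D_{n+1}` rigged configurations for the
data `(L̂, λ̂)`. -/
def RCv (n : ℕ) (lam : ℕ → ℕ) (L : Mat) : Set (Mat × Rig) :=
  {p | supIn (n+1) p.1 ∧ supInJ (n+1) p.2 ∧
       configD n (hatLam n lam) (hatM n L) p.1 ∧
       admD n (hatM n L) p.1 ∧
       rigD n (hatM n L) p.1 p.2 ∧
       (∀ i, p.1 (n, i) = p.1 (n+1, i) ∧ p.2 (n, i) = p.2 (n+1, i)) ∧
       (∀ a j, 1 ≤ a → a ≤ n - 1 → j % 2 = 1 → p.1 (a, j) = 0) ∧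
       (∀ a i, 1 ≤ a → a ≤ n - 1 → ∀ x ∈ p.2 (a, i), x % 2 = 0)}

lemma hatM_apply (n : ℕ) (m : Mat) (q : ℕ × ℕ) :
    hatM n m q =
      if 1 ≤ q.1 ∧ q.1 ≤ n - 1 then (if q.2 % 2 = 0 then m (q.1, q.2 / 2) else 0)
      else if q.1 = n ∨ q.1 = n + 1 then m (n, q.2)
      else 0 := rfl

lemma hatM_eq_sum (n : ℕ) (hn : 3 ≤ n) (m : Mat) (hm : supIn n m) :
    hatM n m = m.sum (fun q c =>
      if q.1 ≤ n - 1 then Finsupp.single (q.1, 2 * q.2) c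
      else Finsupp.single (n, q.2) c + Finsupp.single (n+1, q.2) c) := by
  ext x
  obtain ⟨a, j⟩ := x
  rw [Finsupp.sum_apply, hatM_apply]
  rw [Finsupp.sum]
  by_cases h1 : 1 ≤ a ∧ a ≤ n - 1
  · rw [if_pos h1]
    have ha : a ≤ n - 1 := h1.2
    by_cases h2 : j % 2 = 0
    · rw [if_pos h2]
      rw [Finset.sum_eq_single ((a, j/2) : ℕ × ℕ)]
      · rw [if_pos (by simpa using ha)]
        rw [Finsupp.single_apply, if_pos (by rw [Prod.mk.injEq]; omega)]
      · intro q hq hne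
        have hq' := hm q (Finsupp.mem_support_iff.1 hq)
        by_cases hb : q.1 ≤ n - 1
        · rw [if_pos hb, Finsupp.single_apply, if_neg]
          intro he
          rw [Prod.mk.injEq] at he
          exact hne (Prod.ext he.1 (by omega))
        · rw [if_neg hb, Finsupp.add_apply, Finsupp.single_apply, Finsupp.single_apply,
            if_neg (by rw [Prod.mk.injEq]; omega), if_neg (by rw [Prod.mk.injEq]; omega)]
          rfl
      · intro hnot
        have h0 : m (a, j/2) = 0 := Finsupp.notMem_support_iff.1 hnot
        simp [h0, Finsupp.single_apply]
    · rw [if_neg h2]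
      symm
      apply Finset.sum_eq_zero
      intro q hq
      have hq' := hm q (Finsupp.mem_support_iff.1 hq)
      by_cases hb : q.1 ≤ n - 1
      · rw [if_pos hb, Finsupp.single_apply, if_neg]
        intro he; rw [Prod.mk.injEq] at he; omega
      · rw [if_neg hb, Finsupp.add_apply, Finsupp.single_apply, Finsupp.single_apply,
          if_neg (by rw [Prod.mk.injEq]; omega),
          if_neg (by rw [Prod.mk.injEq]; omega)]
        rfl
  · rw [if_neg h1]
    by_cases h2 : a = n ∨ a = n + 1
    · rw [if_pos h2]
      have hnn : ¬ (n ≤ n - 1) := by omega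
      rw [Finset.sum_eq_single ((n, j) : ℕ × ℕ)]
      · rw [if_neg hnn, Finsupp.add_apply, Finsupp.single_apply, Finsupp.single_apply]
        rcases h2 with h2 | h2 <;> subst h2
        · rw [if_pos (by rfl), if_neg (by rw [Prod.mk.injEq]; omega)]
          ring
        · rw [if_neg (by rw [Prod.mk.injEq]; omega), if_pos (by rfl)]
          ring
      · intro q hq hne
        have hq' := hm q (Finsupp.mem_support_iff.1 hq)
        by_cases hb : q.1 ≤ n - 1
        · rw [if_pos hb, Finsupp.single_apply, if_neg]
          intro he; rw [Prod.mk.injEq] at he; omega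
        · have hq1 : q.1 = n := by omega
          have hj : q.2 ≠ j := fun he => hne (by rw [← hq1, ← he])
          rw [if_neg hb, Finsupp.add_apply, Finsupp.single_apply, Finsupp.single_apply,
            if_neg (by rw [Prod.mk.injEq]; omega),
            if_neg (by rw [Prod.mk.injEq]; omega)]
          rfl
      · intro hnot
        have h0 : m (n, j) = 0 := Finsupp.notMem_support_iff.1 hnot
        simp [h0, Finsupp.single_apply]
    · rw [if_neg h2]
      symm
      apply Finset.sum_eq_zero
      intro q hq
      have hq' := hm q (Finsupp.mem_support_iff.1 hq)
      by_cases hb : q.1 ≤ n - 1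
      · rw [if_pos hb, Finsupp.single_apply, if_neg]
        intro he; rw [Prod.mk.injEq] at he; omega
      · rw [if_neg hb, Finsupp.add_apply, Finsupp.single_apply, Finsupp.single_apply,
          if_neg (by rw [Prod.mk.injEq]; omega),
          if_neg (by rw [Prod.mk.injEq]; omega)]
        rfl

/-- The key transfer lemma. -/
lemma sum_hatM (n : ℕ) (hn : 3 ≤ n) (m : Mat) (hm : supIn n m)
    (f : ℕ × ℕ → ℕ → ℚ) (hf0 : ∀ q, f q 0 = 0)
    (hfadd : ∀ q c d, f q (c + d) = f q c + f q d) :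
    (hatM n m).sum f
      = m.sum (fun q c => if q.1 ≤ n - 1 then f (q.1, 2 * q.2) c
          else f (n, q.2) c + f (n+1, q.2) c) := by
  rw [hatM_eq_sum n hn m hm, Finsupp.sum_sum_index hf0 hfadd]
  apply Finsupp.sum_congr
  intro q hq
  by_cases hb : q.1 ≤ n - 1
  · simp only [hb, if_true]
    rw [Finsupp.sum_single_index (hf0 _)]
  · simp only [hb, if_false]
    rw [Finsupp.sum_add_index' hf0 hfadd,
      Finsupp.sum_single_index (hf0 _), Finsupp.sum_single_index (hf0 _)]



lemma hatJ_apply (n : ℕ) (J : Rig) (q : ℕ × ℕ) :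
    hatJ n J q =
      if 1 ≤ q.1 ∧ q.1 ≤ n - 1 then
        (if q.2 % 2 = 0 then (J (q.1, q.2 / 2)).map (fun x => 2 * x) else 0)
      else if q.1 = n ∨ q.1 = n + 1 then J (n, q.2)
      else 0 := rfl

lemma hatJ_eq_sum (n : ℕ) (hn : 3 ≤ n) (J : Rig) (hJ : supInJ n J) :
    hatJ n J = J.sum (fun q s =>
      if q.1 ≤ n - 1 then Finsupp.single (q.1, 2 * q.2) (s.map (fun x => 2 * x))
      else Finsupp.single (n, q.2) s + Finsupp.single (n+1, q.2) s) := by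
  apply Finsupp.ext
  intro x
  obtain ⟨a, j⟩ := x
  rw [Finsupp.sum_apply, hatJ_apply]
  rw [Finsupp.sum]
  by_cases h1 : 1 ≤ a ∧ a ≤ n - 1
  · rw [if_pos h1]
    have ha : a ≤ n - 1 := h1.2
    by_cases h2 : j % 2 = 0
    · rw [if_pos h2]
      rw [Finset.sum_eq_single ((a, j/2) : ℕ × ℕ)]
      · rw [if_pos (by simpa using ha)]
        rw [Finsupp.single_apply, if_pos (by rw [Prod.mk.injEq]; omega)]
      · intro q hq hne
        have hq' := hJ q (Finsupp.mem_support_iff.1 hq)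
        by_cases hb : q.1 ≤ n - 1
        · rw [if_pos hb, Finsupp.single_apply, if_neg]
          intro he
          rw [Prod.mk.injEq] at he
          exact hne (Prod.ext he.1 (by omega))
        · rw [if_neg hb, Finsupp.add_apply, Finsupp.single_apply, Finsupp.single_apply,
            if_neg (by rw [Prod.mk.injEq]; omega), if_neg (by rw [Prod.mk.injEq]; omega)]
          rfl
      · intro hnot
        have h0 : J (a, j/2) = 0 := Finsupp.notMem_support_iff.1 hnot
        simp [h0, Finsupp.single_apply]
    · rw [if_neg h2]
      symm
      apply Finset.sum_eq_zero
      intro q hq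
      have hq' := hJ q (Finsupp.mem_support_iff.1 hq)
      by_cases hb : q.1 ≤ n - 1
      · rw [if_pos hb, Finsupp.single_apply, if_neg]
        intro he; rw [Prod.mk.injEq] at he; omega
      · rw [if_neg hb, Finsupp.add_apply, Finsupp.single_apply, Finsupp.single_apply,
          if_neg (by rw [Prod.mk.injEq]; omega),
          if_neg (by rw [Prod.mk.injEq]; omega)]
        rfl
  · rw [if_neg h1]
    by_cases h2 : a = n ∨ a = n + 1
    · rw [if_pos h2]
      have hnn : ¬ (n ≤ n - 1) := by omega
      rw [Finset.sum_eq_single ((n, j) : ℕ × ℕ)]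
      · rw [if_neg hnn, Finsupp.add_apply, Finsupp.single_apply, Finsupp.single_apply]
        rcases h2 with h2 | h2 <;> subst h2
        · rw [if_pos (by rfl), if_neg (by rw [Prod.mk.injEq]; omega)]
          simp
        · rw [if_neg (by rw [Prod.mk.injEq]; omega), if_pos (by rfl)]
          simp
      · intro q hq hne
        have hq' := hJ q (Finsupp.mem_support_iff.1 hq)
        by_cases hb : q.1 ≤ n - 1
        · rw [if_pos hb, Finsupp.single_apply, if_neg]
          intro he; rw [Prod.mk.injEq] at he; omega
        · have hq1 : q.1 = n := by omega
          have hj : q.2 ≠ j := fun he => hne (by rw [← hq1, ← he])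
          rw [if_neg hb, Finsupp.add_apply, Finsupp.single_apply, Finsupp.single_apply,
            if_neg (by rw [Prod.mk.injEq]; omega),
            if_neg (by rw [Prod.mk.injEq]; omega)]
          rfl
      · intro hnot
        have h0 : J (n, j) = 0 := Finsupp.notMem_support_iff.1 hnot
        simp [h0, Finsupp.single_apply]
    · rw [if_neg h2]
      symm
      apply Finset.sum_eq_zero
      intro q hq
      have hq' := hJ q (Finsupp.mem_support_iff.1 hq)
      by_cases hb : q.1 ≤ n - 1
      · rw [if_pos hb, Finsupp.single_apply, if_neg]
        intro he; rw [Prod.mk.injEq] at he; omega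
      · rw [if_neg hb, Finsupp.add_apply, Finsupp.single_apply, Finsupp.single_apply,
          if_neg (by rw [Prod.mk.injEq]; omega),
          if_neg (by rw [Prod.mk.injEq]; omega)]
        rfl

lemma sum_hatJ (n : ℕ) (hn : 3 ≤ n) (J : Rig) (hJ : supInJ n J)
    (f : ℕ × ℕ → Multiset ℕ → ℚ) (hf0 : ∀ q, f q 0 = 0)
    (hfadd : ∀ q s t, f q (s + t) = f q s + f q t) :
    (hatJ n J).sum f
      = J.sum (fun q s => if q.1 ≤ n - 1 then f (q.1, 2 * q.2) (s.map (fun x => 2 * x))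
          else f (n, q.2) s + f (n+1, q.2) s) := by
  rw [hatJ_eq_sum n hn J hJ, Finsupp.sum_sum_index hf0 hfadd]
  apply Finsupp.sum_congr
  intro q hq
  by_cases hb : q.1 ≤ n - 1
  · simp only [hb, if_true]
    rw [Finsupp.sum_single_index (hf0 _)]
  · simp only [hb, if_false]
    rw [Finsupp.sum_add_index' hf0 hfadd,
      Finsupp.sum_single_index (hf0 _), Finsupp.sum_single_index (hf0 _)]

section FormLemmas

lemma formD_eq_formB {n a b : ℕ} (hn : 3 ≤ n) (ha1 : 1 ≤ a) (ha : a ≤ n - 1) (hb1 : 1 ≤ b) (hb : b ≤ n - 1) :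
    formD n a b = formB n a b := by
  unfold formD formB
  split_ifs <;> (try unfold edgeD at *) <;> first | rfl | (exfalso; omega) | norm_num

lemma formD_n_left {n a : ℕ} (hn : 3 ≤ n) (ha1 : 1 ≤ a) (ha : a ≤ n - 1) :
    formD n a n = formB n a n ∧ formD n a (n+1) = formB n a n := by
  unfold formD formB
  constructor <;> (split_ifs <;> (try unfold edgeD at *) <;> first | rfl | (exfalso; omega) | norm_num)

lemma formD_n_right {n b : ℕ} (hn : 3 ≤ n) (hb1 : 1 ≤ b) (hb : b ≤ n - 1) :
    formD n n b = formB n n b ∧ formD n (n+1) b = formB n n b := by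
  unfold formD formB
  constructor <;> (split_ifs <;> (try unfold edgeD at *) <;> first | rfl | (exfalso; omega) | norm_num)

lemma formD_corner {n : ℕ} (hn : 3 ≤ n) :
    formD n n n = 2 ∧ formD n n (n+1) = 0 ∧ formD n (n+1) n = 0 ∧ formD n (n+1) (n+1) = 2 := by
  unfold formD
  refine ⟨?_, ?_, ?_, ?_⟩ <;> (split_ifs <;> (try unfold edgeD at *) <;> first | rfl | (exfalso; omega) | norm_num)

lemma formB_nn {n : ℕ} : formB n n n = 1 := by
  unfold formB; split_ifs <;> first | rfl | (exfalso; omega)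

lemma formB_symm {n : ℕ} (a b : ℕ) : formB n a b = formB n b a := by
  unfold formB
  split_ifs <;> first | rfl | (exfalso; omega) | norm_num

lemma cartanB_eq_formB {n a : ℕ} (hn : 3 ≤ n) (ha1 : 1 ≤ a) (ha : a ≤ n - 1) (b : ℕ) :
    cartanB n a b = formB n a b := by
  unfold cartanB
  have : formB n a a = 2 := by
    unfold formB; split_ifs <;> first | rfl | (exfalso; omega)
  rw [this]; ring

lemma cartanB_n {n : ℕ} (b : ℕ) : cartanB n n b = 2 * formB n n b := by
  unfold cartanB
  rw [formB_nn]; ring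

lemma tB_lt {n b : ℕ} (hn : 3 ≤ n) (hb : b ≤ n - 1) : tB n b = 1 := by
  unfold tB; rw [if_neg (by omega : ¬ b = n)]

lemma tB_n {n : ℕ} : tB n n = 2 := by unfold tB; rw [if_pos rfl]

end FormLemmas


lemma sum_hatM_lin (n : ℕ) (hn : 3 ≤ n) (m : Mat) (hm : supIn n m) (c0 : ℚ)
    (f g : ℕ × ℕ → ℕ → ℚ)
    (hf0 : ∀ q, f q 0 = 0) (hfadd : ∀ q c d, f q (c + d) = f q c + f q d)
    (hlow : ∀ b k c, 1 ≤ b → b ≤ n - 1 → 1 ≤ k → f (b, 2*k) c = c0 * g (b, k) c)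
    (hhigh : ∀ k c, 1 ≤ k → f (n, k) c + f (n+1, k) c = c0 * g (n, k) c) :
    (hatM n m).sum f = c0 * m.sum g := by
  rw [sum_hatM n hn m hm f hf0 hfadd, Finsupp.mul_sum]
  apply Finsupp.sum_congr
  intro q hq
  have hq' := hm q (Finsupp.mem_support_iff.1 hq)
  by_cases hb : q.1 ≤ n - 1
  · rw [if_pos hb]
    have := hlow q.1 q.2 (m q) hq'.1 hb hq'.2.2
    simpa using this
  · rw [if_neg hb]
    have hq1 : q.1 = n := by omega
    rw [hhigh q.2 (m q) hq'.2.2]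
    congr 1
    rw [show ((n:ℕ), q.2) = q from by rw [← hq1]]

lemma hatM_support_struct {n : ℕ} (hn : 3 ≤ n) (m : Mat) (q : ℕ × ℕ) (h : hatM n m q ≠ 0) :
    1 ≤ q.1 ∧ ((q.1 ≤ n - 1 ∧ q.2 % 2 = 0) ∨ q.1 = n ∨ q.1 = n + 1) := by
  rw [hatM_apply] at h
  by_cases h1 : 1 ≤ q.1 ∧ q.1 ≤ n - 1
  · rw [if_pos h1] at h
    by_cases h2 : q.2 % 2 = 0
    · exact ⟨h1.1, Or.inl ⟨h1.2, h2⟩⟩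
    · rw [if_neg h2] at h
      exact absurd rfl h
  · rw [if_neg h1] at h
    by_cases h2 : q.1 = n ∨ q.1 = n + 1
    · exact ⟨by rcases h2 with h|h <;> omega, Or.inr h2⟩
    · rw [if_neg h2] at h
      exact absurd rfl h


section Equalities
variable {n : ℕ}

-- config m-sums
lemma E1 (hn : 3 ≤ n) (m : Mat) (hm : supIn n m) {a : ℕ} (ha1 : 1 ≤ a) (ha : a ≤ n - 1) :
    ((hatM n m).sum fun q c => (q.2 : ℚ) * c * formD n a q.1)
      = 2 * m.sum fun q c => (q.2 : ℚ) * c * cartanB n a q.1 := by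
  apply sum_hatM_lin n hn m hm 2
  · intro q; push_cast; ring
  · intro q c d; push_cast; ring
  · intro b k c hb1 hb hk
    dsimp only
    rw [formD_eq_formB hn ha1 ha hb1 hb, ← cartanB_eq_formB hn ha1 ha b]
    push_cast; ring
  · intro k c hk
    dsimp only
    rw [(formD_n_left hn ha1 ha).1, (formD_n_left hn ha1 ha).2,
      ← cartanB_eq_formB hn ha1 ha n]
    push_cast; ring

lemma E2 (hn : 3 ≤ n) (m : Mat) (hm : supIn n m) :
    ((hatM n m).sum fun q c => (q.2 : ℚ) * c * formD n n q.1)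
      = m.sum fun q c => (q.2 : ℚ) * c * cartanB n n q.1 := by
  rw [show (m.sum fun q c => (q.2 : ℚ) * c * cartanB n n q.1)
      = 1 * m.sum fun q c => (q.2 : ℚ) * c * cartanB n n q.1 from (one_mul _).symm]
  apply sum_hatM_lin n hn m hm 1
  · intro q; push_cast; ring
  · intro q c d; push_cast; ring
  · intro b k c hb1 hb hk
    dsimp only
    rw [(formD_n_right hn hb1 hb).1, cartanB_n]
    push_cast; ring
  · intro k c hk
    dsimp only
    rw [(formD_corner hn).1, (formD_corner hn).2.1, cartanB_n, formB_nn]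
    push_cast; ring

lemma E2' (hn : 3 ≤ n) (m : Mat) (hm : supIn n m) :
    ((hatM n m).sum fun q c => (q.2 : ℚ) * c * formD n (n+1) q.1)
      = m.sum fun q c => (q.2 : ℚ) * c * cartanB n n q.1 := by
  rw [show (m.sum fun q c => (q.2 : ℚ) * c * cartanB n n q.1)
      = 1 * m.sum fun q c => (q.2 : ℚ) * c * cartanB n n q.1 from (one_mul _).symm]
  apply sum_hatM_lin n hn m hm 1
  · intro q; push_cast; ring
  · intro q c d; push_cast; ring
  · intro b k c hb1 hb hk
    dsimp only
    rw [(formD_n_right hn hb1 hb).2, cartanB_n]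
    push_cast; ring
  · intro k c hk
    dsimp only
    rw [(formD_corner hn).2.2.1, (formD_corner hn).2.2.2, cartanB_n, formB_nn]
    push_cast; ring

-- config L-sums
lemma E3 (hn : 3 ≤ n) (L : Mat) (hL : supIn n L) {a : ℕ} (ha1 : 1 ≤ a) (ha : a ≤ n - 1) :
    ((hatM n L).sum fun q c => if q.1 = a then (q.2 : ℚ) * c else 0)
      = 2 * L.sum fun q c => if q.1 = a then (q.2 : ℚ) * c else 0 := by
  apply sum_hatM_lin n hn L hL 2
  · intro q; split_ifs <;> simp
  · intro q c d; split_ifs <;> push_cast <;> ring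
  · intro b k c hb1 hb hk
    dsimp only
    split_ifs with h
    · push_cast; ring
    · ring
  · intro k c hk
    dsimp only
    rw [if_neg (by omega : ¬ (n:ℕ) = a), if_neg (by omega : ¬ (n+1 : ℕ) = a)]
    ring

lemma E4 (hn : 3 ≤ n) (L : Mat) (hL : supIn n L) :
    ((hatM n L).sum fun q c => if q.1 = n then (q.2 : ℚ) * c else 0)
      = L.sum fun q c => if q.1 = n then (q.2 : ℚ) * c else 0 := by
  rw [show (L.sum fun q c => if q.1 = n then (q.2 : ℚ) * c else 0)
      = 1 * L.sum fun q c => if q.1 = n then (q.2 : ℚ) * c else 0 from (one_mul _).symm]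
  apply sum_hatM_lin n hn L hL 1
  · intro q; split_ifs <;> simp
  · intro q c d; split_ifs <;> push_cast <;> ring
  · intro b k c hb1 hb hk
    dsimp only
    rw [if_neg (by omega : ¬ b = n), if_neg (by omega : ¬ b = n)]
    ring
  · intro k c hk
    dsimp only
    rw [if_pos rfl, if_neg (by omega : ¬ (n+1 : ℕ) = n)]
    ring

lemma E4' (hn : 3 ≤ n) (L : Mat) (hL : supIn n L) :
    ((hatM n L).sum fun q c => if q.1 = n + 1 then (q.2 : ℚ) * c else 0)
      = L.sum fun q c => if q.1 = n then (q.2 : ℚ) * c else 0 := by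
  rw [show (L.sum fun q c => if q.1 = n then (q.2 : ℚ) * c else 0)
      = 1 * L.sum fun q c => if q.1 = n then (q.2 : ℚ) * c else 0 from (one_mul _).symm]
  apply sum_hatM_lin n hn L hL 1
  · intro q; split_ifs <;> simp
  · intro q c d; split_ifs <;> push_cast <;> ring
  · intro b k c hb1 hb hk
    dsimp only
    rw [if_neg (by omega : ¬ b = n + 1), if_neg (by omega : ¬ b = n)]
    ring
  · intro k c hk
    dsimp only
    rw [if_neg (by omega : ¬ (n : ℕ) = n + 1), if_pos rfl]
    simp


lemma Va (hn : 3 ≤ n) (L m : Mat) (hL : supIn n L) (hm : supIn n m)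
    {a : ℕ} (ha1 : 1 ≤ a) (ha : a ≤ n - 1) (i : ℕ) :
    vacD n (hatM n L) (hatM n m) a (2 * i) = 2 * vacB n L m a i := by
  unfold vacD vacB
  rw [sum_hatM_lin n hn L hL 2
      (fun q c => if q.1 = a then ((min (2*i) q.2 : ℕ) : ℚ) * c else 0)
      (fun q c => if q.1 = a then ((min i q.2 : ℕ) : ℚ) * c else 0)
      (by intro q; split_ifs <;> simp)
      (by intro q c d; split_ifs <;> push_cast <;> ring)
      (by
        intro b k c hb1 hb hk
        dsimp only
        split_ifs with h
        · have hmin : min (2*i) (2*k) = 2 * min i k := by omega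
          rw [hmin]; push_cast; ring
        · ring)
      (by
        intro k c hk
        dsimp only
        rw [if_neg (by omega : ¬ (n:ℕ) = a), if_neg (by omega : ¬ (n+1 : ℕ) = a),
          if_neg (by omega : ¬ (n:ℕ) = a)]
        ring),
    sum_hatM_lin n hn m hm 2
      (fun q c => formD n a q.1 * ((min (2*i) q.2 : ℕ) : ℚ) * c)
      (fun q c => formB n a q.1 * ((min (tB n q.1 * i) (tB n a * q.2) : ℕ) : ℚ) * c)
      (by intro q; simp)
      (by intro q c d; push_cast; ring)
      (by
        intro b k c hb1 hb hk
        dsimp only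
        rw [formD_eq_formB hn ha1 ha hb1 hb, tB_lt hn hb, tB_lt hn ha, one_mul, one_mul]
        have hmin : min (2*i) (2*k) = 2 * min i k := by omega
        rw [hmin]; push_cast; ring)
      (by
        intro k c hk
        dsimp only
        rw [(formD_n_left hn ha1 ha).1, (formD_n_left hn ha1 ha).2, tB_n, tB_lt hn ha, one_mul]
        push_cast; ring)]
  ring

lemma Vb (hn : 3 ≤ n) (L m : Mat) (hL : supIn n L) (hm : supIn n m) (i : ℕ) :
    vacD n (hatM n L) (hatM n m) n i = vacB n L m n i := by
  unfold vacD vacB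
  rw [sum_hatM_lin n hn L hL 1
      (fun q c => if q.1 = n then ((min i q.2 : ℕ) : ℚ) * c else 0)
      (fun q c => if q.1 = n then ((min i q.2 : ℕ) : ℚ) * c else 0)
      (by intro q; split_ifs <;> simp)
      (by intro q c d; split_ifs <;> push_cast <;> ring)
      (by
        intro b k c hb1 hb hk
        dsimp only
        rw [if_neg (by omega : ¬ b = n), if_neg (by omega : ¬ b = n)]
        ring)
      (by
        intro k c hk
        dsimp only
        rw [if_pos rfl, if_neg (by omega : ¬ (n+1 : ℕ) = n)]
        ring),
    sum_hatM_lin n hn m hm 1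
      (fun q c => formD n n q.1 * ((min i q.2 : ℕ) : ℚ) * c)
      (fun q c => formB n n q.1 * ((min (tB n q.1 * i) (tB n n * q.2) : ℕ) : ℚ) * c)
      (by intro q; simp)
      (by intro q c d; push_cast; ring)
      (by
        intro b k c hb1 hb hk
        dsimp only
        rw [(formD_n_right hn hb1 hb).1, tB_lt hn hb, tB_n, one_mul]
        ring)
      (by
        intro k c hk
        dsimp only
        rw [(formD_corner hn).1, (formD_corner hn).2.1, formB_nn, tB_n]
        have hmin : min (2*i) (2*k) = 2 * min i k := by omega
        rw [hmin]; push_cast; ring)]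
  ring

lemma Vb' (hn : 3 ≤ n) (L m : Mat) (hL : supIn n L) (hm : supIn n m) (i : ℕ) :
    vacD n (hatM n L) (hatM n m) (n+1) i = vacB n L m n i := by
  unfold vacD vacB
  rw [sum_hatM_lin n hn L hL 1
      (fun q c => if q.1 = n + 1 then ((min i q.2 : ℕ) : ℚ) * c else 0)
      (fun q c => if q.1 = n then ((min i q.2 : ℕ) : ℚ) * c else 0)
      (by intro q; split_ifs <;> simp)
      (by intro q c d; split_ifs <;> push_cast <;> ring)
      (by
        intro b k c hb1 hb hk
        dsimp only
        rw [if_neg (by omega : ¬ b = n + 1), if_neg (by omega : ¬ b = n)]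
        ring)
      (by
        intro k c hk
        dsimp only
        rw [if_neg (by omega : ¬ (n : ℕ) = n + 1), if_pos rfl]
        simp),
    sum_hatM_lin n hn m hm 1
      (fun q c => formD n (n+1) q.1 * ((min i q.2 : ℕ) : ℚ) * c)
      (fun q c => formB n n q.1 * ((min (tB n q.1 * i) (tB n n * q.2) : ℕ) : ℚ) * c)
      (by intro q; simp)
      (by intro q c d; push_cast; ring)
      (by
        intro b k c hb1 hb hk
        dsimp only
        rw [(formD_n_right hn hb1 hb).2, tB_lt hn hb, tB_n, one_mul]
        ring)
      (by
        intro k c hk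
        dsimp only
        rw [(formD_corner hn).2.2.1, (formD_corner hn).2.2.2, formB_nn, tB_n]
        have hmin : min (2*i) (2*k) = 2 * min i k := by omega
        rw [hmin]; push_cast; ring)]
  ring

lemma vacB_zero (L m : Mat) (a : ℕ) : vacB n L m a 0 = 0 := by
  unfold vacB
  have h1 : (L.sum fun q c => if q.1 = a then ((min 0 q.2 : ℕ) : ℚ) * c else 0) = 0 := by
    rw [Finsupp.sum]
    apply Finset.sum_eq_zero
    intro q hq
    split_ifs <;> simp
  have h2 : (m.sum fun q c => formB n a q.1 * ((min (tB n q.1 * 0) (tB n a * q.2) : ℕ) : ℚ) * c) = 0 := by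
    rw [Finsupp.sum]
    apply Finset.sum_eq_zero
    intro q hq
    simp
  rw [h1, h2]; ring


lemma formB_an_nonpos {a : ℕ} (hn : 3 ≤ n) (ha : a ≤ n - 1) : formB n a n ≤ 0 := by
  unfold formB
  split_ifs <;> first | (exfalso; omega) | norm_num

lemma msum2 (s : Multiset ℕ) : (s.map fun x => 2*x).sum = 2 * s.sum := by
  induction s using Multiset.induction_on with
  | empty => simp
  | cons a s ih => simp [ih]; ring

lemma JS (hn : 3 ≤ n) (J : Rig) (hJ : supInJ n J) : Jsize (hatJ n J) = 2 * Jsize J := by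
  unfold Jsize
  rw [sum_hatJ n hn J hJ (fun _ s => ((s.sum : ℕ) : ℚ))
    (by intro q; simp)
    (by intro q s t; push_cast [Multiset.sum_add]; ring),
    Finsupp.sum, Finsupp.sum, Finset.mul_sum]
  apply Finset.sum_congr rfl
  intro q hq
  split_ifs with h
  · rw [msum2]; push_cast; ring
  · push_cast; ring

lemma CC (hn : 3 ≤ n) (m : Mat) (hm : supIn n m) : ccD n (hatM n m) = 2 * ccB n m := by
  unfold ccD ccB
  rw [sum_hatM_lin n hn m hm 2
    (fun q c => (hatM n m).sum fun r d => formD n q.1 r.1 * ((min q.2 r.2 : ℕ) : ℚ) * c * d)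
    (fun q c => m.sum fun r d =>
      formB n q.1 r.1 * ((min (tB n r.1 * q.2) (tB n q.1 * r.2) : ℕ) : ℚ) * c * d)
    (by
      intro q
      rw [Finsupp.sum]
      apply Finset.sum_eq_zero
      intro r hr; simp)
    (by
      intro q c d
      rw [← Finsupp.sum_add]
      apply Finsupp.sum_congr
      intro r hr; push_cast; ring)
    (by
      intro b k c hb1 hb hk
      dsimp only
      apply sum_hatM_lin n hn m hm 2
      · intro r; simp
      · intro r e e'; push_cast; ring
      · intro b2 k2 e hb21 hb2 hk2
        dsimp only
        rw [formD_eq_formB hn hb1 hb hb21 hb2, tB_lt hn hb2, tB_lt hn hb, one_mul, one_mul]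
        have hmin : min (2*k) (2*k2) = 2 * min k k2 := by omega
        rw [hmin]; push_cast; ring
      · intro k2 e hk2
        dsimp only
        rw [(formD_n_left hn hb1 hb).1, (formD_n_left hn hb1 hb).2, tB_n, tB_lt hn hb, one_mul]
        push_cast; ring)
    (by
      intro k c hk
      dsimp only
      rw [← Finsupp.sum_add]
      apply sum_hatM_lin n hn m hm 2
      · intro r; simp
      · intro r e e'; push_cast; ring
      · intro b2 k2 e hb21 hb2 hk2
        dsimp only
        rw [(formD_n_right hn hb21 hb2).1, (formD_n_right hn hb21 hb2).2,
          tB_lt hn hb2, tB_n, one_mul]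
        push_cast; ring
      · intro k2 e hk2
        dsimp only
        rw [(formD_corner hn).1, (formD_corner hn).2.1, (formD_corner hn).2.2.1,
          (formD_corner hn).2.2.2, formB_nn, tB_n]
        have hmin : min (2*k) (2*k2) = 2 * min k k2 := by omega
        rw [hmin]; push_cast; ring)]
  ring

lemma Vodd (hn : 3 ≤ n) (L m : Mat) (hL : supIn n L) (hm : supIn n m)
    {a j : ℕ} (ha1 : 1 ≤ a) (ha : a ≤ n - 1) (hj : j % 2 = 1) :
    vacD n (hatM n L) (hatM n m) a (j-1) + vacD n (hatM n L) (hatM n m) a (j+1)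
      ≤ 2 * vacD n (hatM n L) (hatM n m) a j := by
  unfold vacD
  have hLpart : ((hatM n L).sum fun q c => if q.1 = a then ((min (j-1) q.2 : ℕ) : ℚ) * c else 0)
      + ((hatM n L).sum fun q c => if q.1 = a then ((min (j+1) q.2 : ℕ) : ℚ) * c else 0)
      = 2 * ((hatM n L).sum fun q c => if q.1 = a then ((min j q.2 : ℕ) : ℚ) * c else 0) := by
    rw [← Finsupp.sum_add, Finsupp.mul_sum]
    apply Finsupp.sum_congr
    intro q hq
    have hs := hatM_support_struct hn L q (Finsupp.mem_support_iff.1 hq)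
    split_ifs with h
    · have heven : q.2 % 2 = 0 := by
        rcases hs.2 with ⟨_, he⟩ | h' | h' <;> omega
      have hmin : min (j-1) q.2 + min (j+1) q.2 = 2 * min j q.2 := by omega
      have hc : ((min (j-1) q.2 : ℕ) : ℚ) + ((min (j+1) q.2 : ℕ) : ℚ)
          = 2 * ((min j q.2 : ℕ) : ℚ) := by exact_mod_cast hmin
      nlinarith [hc]
    · ring
  have hMkey : 0 ≤ (hatM n m).sum (fun q c =>
      formD n a q.1 * ((min (j-1) q.2 : ℕ) : ℚ) * c
      + formD n a q.1 * ((min (j+1) q.2 : ℕ) : ℚ) * c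
      - 2 * (formD n a q.1 * ((min j q.2 : ℕ) : ℚ) * c)) := by
    rw [Finsupp.sum]
    apply Finset.sum_nonneg
    intro q hq
    have hs := hatM_support_struct hn m q (Finsupp.mem_support_iff.1 hq)
    have hc0 : (0:ℚ) ≤ (hatM n m) q := by positivity
    have hX : formD n a q.1 * ((min (j-1) q.2 : ℕ) : ℚ) * ((hatM n m) q)
        + formD n a q.1 * ((min (j+1) q.2 : ℕ) : ℚ) * ((hatM n m) q)
        - 2 * (formD n a q.1 * ((min j q.2 : ℕ) : ℚ) * ((hatM n m) q))
        = (formD n a q.1 * (((min (j-1) q.2 : ℕ) : ℚ) + ((min (j+1) q.2 : ℕ) : ℚ)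
            - 2 * ((min j q.2 : ℕ) : ℚ))) * ((hatM n m) q) := by ring
    rcases hs.2 with ⟨hle, heven⟩ | hhi
    · have hmin : min (j-1) q.2 + min (j+1) q.2 = 2 * min j q.2 := by omega
      have hc : ((min (j-1) q.2 : ℕ) : ℚ) + ((min (j+1) q.2 : ℕ) : ℚ)
          = 2 * ((min j q.2 : ℕ) : ℚ) := by exact_mod_cast hmin
      rw [hX, hc, sub_self, mul_zero, zero_mul]
    · have hfD : formD n a q.1 ≤ 0 := by
        rcases hhi with h' | h'
        · rw [h', (formD_n_left hn ha1 ha).1]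
          exact formB_an_nonpos hn ha
        · rw [h', (formD_n_left hn ha1 ha).2]
          exact formB_an_nonpos hn ha
      have hminle : min (j-1) q.2 + min (j+1) q.2 ≤ 2 * min j q.2 := by omega
      have hcomb : ((min (j-1) q.2 : ℕ) : ℚ) + ((min (j+1) q.2 : ℕ) : ℚ)
          - 2 * ((min j q.2 : ℕ) : ℚ) ≤ 0 := by
        have h2 : ((min (j-1) q.2 : ℕ) : ℚ) + ((min (j+1) q.2 : ℕ) : ℚ)
            ≤ 2 * ((min j q.2 : ℕ) : ℚ) := by exact_mod_cast hminle
        linarith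
      rw [hX]
      apply mul_nonneg _ hc0
      have : formD n a q.1 * (((min (j-1) q.2 : ℕ) : ℚ) + ((min (j+1) q.2 : ℕ) : ℚ)
          - 2 * ((min j q.2 : ℕ) : ℚ))
          = (- formD n a q.1) * (-(((min (j-1) q.2 : ℕ) : ℚ) + ((min (j+1) q.2 : ℕ) : ℚ)
          - 2 * ((min j q.2 : ℕ) : ℚ))) := by ring
      rw [this]
      apply mul_nonneg <;> linarith
  have hMpart : 2 * ((hatM n m).sum fun q c =>
        formD n a q.1 * ((min j q.2 : ℕ) : ℚ) * c)
      ≤ ((hatM n m).sum fun q c => formD n a q.1 * ((min (j-1) q.2 : ℕ) : ℚ) * c)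
        + ((hatM n m).sum fun q c => formD n a q.1 * ((min (j+1) q.2 : ℕ) : ℚ) * c) := by
    have := hMkey
    rw [show (fun (q : ℕ × ℕ) (c : ℕ) =>
        formD n a q.1 * ((min (j-1) q.2 : ℕ) : ℚ) * c
        + formD n a q.1 * ((min (j+1) q.2 : ℕ) : ℚ) * c
        - 2 * (formD n a q.1 * ((min j q.2 : ℕ) : ℚ) * c))
      = (fun (q : ℕ × ℕ) (c : ℕ) =>
        (formD n a q.1 * ((min (j-1) q.2 : ℕ) : ℚ) * c
        + formD n a q.1 * ((min (j+1) q.2 : ℕ) : ℚ) * c)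
        - 2 * (formD n a q.1 * ((min j q.2 : ℕ) : ℚ) * c)) from rfl,
      Finsupp.sum_sub, Finsupp.sum_add, ← Finsupp.mul_sum] at this
    linarith
  linarith

end Equalities


noncomputable def invM (n : ℕ) (m : Mat) : Mat :=
  Finsupp.onFinset
    (Finset.range (n+1) ×ˢ Finset.range (m.support.sup Prod.snd + 1))
    (fun q =>
      if 1 ≤ q.1 ∧ q.1 ≤ n - 1 then m (q.1, 2 * q.2)
      else if q.1 = n then m (n, q.2)
      else 0)
    (by
      intro q hq
      obtain ⟨a, i⟩ := q
      simp only [Finset.mem_product, Finset.mem_range]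
      dsimp only at hq
      split_ifs at hq with h1 h2
      · have hs : ((a, 2 * i) : ℕ × ℕ) ∈ m.support := Finsupp.mem_support_iff.2 hq
        have hle : 2 * i ≤ m.support.sup Prod.snd := Finset.le_sup (f := Prod.snd) hs
        omega
      · have hs : ((n, i) : ℕ × ℕ) ∈ m.support := Finsupp.mem_support_iff.2 hq
        have hle : i ≤ m.support.sup Prod.snd := Finset.le_sup (f := Prod.snd) hs
        omega
      · exact absurd rfl hq)

lemma invM_apply (n : ℕ) (m : Mat) (q : ℕ × ℕ) :
    invM n m q =
      if 1 ≤ q.1 ∧ q.1 ≤ n - 1 then m (q.1, 2 * q.2)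
      else if q.1 = n then m (n, q.2)
      else 0 := rfl

noncomputable def invJ (n : ℕ) (J : Rig) : Rig :=
  Finsupp.onFinset
    (Finset.range (n+1) ×ˢ Finset.range (J.support.sup Prod.snd + 1))
    (fun q =>
      if 1 ≤ q.1 ∧ q.1 ≤ n - 1 then (J (q.1, 2 * q.2)).map (fun x => x / 2)
      else if q.1 = n then J (n, q.2)
      else 0)
    (by
      intro q hq
      obtain ⟨a, i⟩ := q
      simp only [Finset.mem_product, Finset.mem_range]
      dsimp only at hq
      split_ifs at hq with h1 h2
      · rw [Ne, Multiset.map_eq_zero] at hq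
        have hs : ((a, 2 * i) : ℕ × ℕ) ∈ J.support := Finsupp.mem_support_iff.2 hq
        have hle : 2 * i ≤ J.support.sup Prod.snd := Finset.le_sup (f := Prod.snd) hs
        omega
      · have hs : ((n, i) : ℕ × ℕ) ∈ J.support := Finsupp.mem_support_iff.2 hq
        have hle : i ≤ J.support.sup Prod.snd := Finset.le_sup (f := Prod.snd) hs
        omega
      · exact absurd rfl hq)

lemma invJ_apply (n : ℕ) (J : Rig) (q : ℕ × ℕ) :
    invJ n J q =
      if 1 ≤ q.1 ∧ q.1 ≤ n - 1 then (J (q.1, 2 * q.2)).map (fun x => x / 2)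
      else if q.1 = n then J (n, q.2)
      else 0 := rfl

lemma hatM_invM {n : ℕ} (hn : 3 ≤ n) (mh : Mat) (hsup : supIn (n+1) mh)
    (hsym : ∀ i, mh (n, i) = mh (n+1, i))
    (hpar : ∀ a j, 1 ≤ a → a ≤ n - 1 → j % 2 = 1 → mh (a, j) = 0) :
    hatM n (invM n mh) = mh := by
  ext x
  obtain ⟨a, j⟩ := x
  rw [hatM_apply]
  by_cases h1 : 1 ≤ a ∧ a ≤ n - 1
  · rw [if_pos h1]
    by_cases h2 : j % 2 = 0
    · rw [if_pos h2, invM_apply, if_pos (by exact ⟨h1.1, h1.2⟩ : 1 ≤ a ∧ a ≤ n - 1)]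
      dsimp only
      rw [show 2 * (j / 2) = j from by omega]
    · rw [if_neg h2]
      exact (hpar a j h1.1 h1.2 (by omega)).symm
  · rw [if_neg h1]
    by_cases h2 : a = n ∨ a = n + 1
    · rw [if_pos h2, invM_apply, if_neg (by omega : ¬(1 ≤ n ∧ n ≤ n - 1)),
        if_pos rfl]
      rcases h2 with h2 | h2 <;> subst h2
      · rfl
      · exact hsym j
    · rw [if_neg h2]
      by_contra hne
      have := hsup (a, j) (fun hc => hne hc.symm)
      dsimp only at this
      omega

lemma hatJ_invJ {n : ℕ} (hn : 3 ≤ n) (Jh : Rig) (hsup : supInJ (n+1) Jh)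
    (hsym : ∀ i, Jh (n, i) = Jh (n+1, i))
    (heven : ∀ a i, 1 ≤ a → a ≤ n - 1 → ∀ x ∈ Jh (a, i), x % 2 = 0)
    (hodd : ∀ a j, 1 ≤ a → a ≤ n - 1 → j % 2 = 1 → Jh (a, j) = 0) :
    hatJ n (invJ n Jh) = Jh := by
  apply Finsupp.ext
  intro x
  obtain ⟨a, j⟩ := x
  rw [hatJ_apply]
  by_cases h1 : 1 ≤ a ∧ a ≤ n - 1
  · rw [if_pos h1]
    by_cases h2 : j % 2 = 0
    · rw [if_pos h2, invJ_apply, if_pos (by exact ⟨h1.1, h1.2⟩ : 1 ≤ a ∧ a ≤ n - 1)]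
      dsimp only
      rw [show 2 * (j / 2) = j from by omega, Multiset.map_map]
      calc (Jh (a, j)).map ((fun x => 2 * x) ∘ (fun x => x / 2))
          = (Jh (a, j)).map id := by
            apply Multiset.map_congr rfl
            intro x hx
            have := heven a j h1.1 h1.2 x hx
            simp only [Function.comp_apply, id_eq]
            omega
        _ = Jh (a, j) := Multiset.map_id _
    · rw [if_neg h2]
      exact (hodd a j h1.1 h1.2 (by omega)).symm
  · rw [if_neg h1]
    by_cases h2 : a = n ∨ a = n + 1
    · rw [if_pos h2, invJ_apply, if_neg (by omega : ¬(1 ≤ n ∧ n ≤ n - 1)), if_pos rfl]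
      rcases h2 with h2 | h2 <;> subst h2
      · rfl
      · exact hsym j
    · rw [if_neg h2]
      by_contra hne
      have := hsup (a, j) (fun hc => hne hc.symm)
      dsimp only at this
      omega


lemma hatM_inj {n : ℕ} (hn : 3 ≤ n) {m m' : Mat} (hm : supIn n m) (hm' : supIn n m')
    (h : hatM n m = hatM n m') : m = m' := by
  ext x
  obtain ⟨a, i⟩ := x
  by_cases hin : 1 ≤ a ∧ a ≤ n ∧ 1 ≤ i
  · by_cases hle : a ≤ n - 1
    · have e : ∀ mm : Mat, hatM n mm (a, 2 * i) = mm (a, i) := by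
        intro mm
        rw [hatM_apply, if_pos (⟨hin.1, hle⟩ : 1 ≤ a ∧ a ≤ n - 1),
          if_pos (show 2 * i % 2 = 0 by omega)]
        have : ((a : ℕ), 2 * i / 2) = (a, i) := by
          rw [Prod.mk.injEq]
          omega
        rw [this]
      rw [← e m, ← e m', h]
    · have han : n = a := by omega
      subst han
      have e : ∀ mm : Mat, hatM n mm (n, i) = mm (n, i) := by
        intro mm
        rw [hatM_apply, if_neg (by omega : ¬(1 ≤ n ∧ n ≤ n - 1)), if_pos (Or.inl rfl)]
      rw [← e m, ← e m', h]
  · have z1 : m (a, i) = 0 := by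
      by_contra hc
      have := hm _ hc
      dsimp only at this
      omega
    have z2 : m' (a, i) = 0 := by
      by_contra hc
      have := hm' _ hc
      dsimp only at this
      omega
    rw [z1, z2]

lemma hatJ_inj {n : ℕ} (hn : 3 ≤ n) {J J' : Rig} (hJ : supInJ n J) (hJ' : supInJ n J')
    (h : hatJ n J = hatJ n J') : J = J' := by
  apply Finsupp.ext
  intro x
  obtain ⟨a, i⟩ := x
  by_cases hin : 1 ≤ a ∧ a ≤ n ∧ 1 ≤ i
  · by_cases hle : a ≤ n - 1
    · have e : ∀ JJ : Rig, hatJ n JJ (a, 2 * i) = (JJ (a, i)).map (fun x => 2 * x) := by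
        intro JJ
        rw [hatJ_apply, if_pos (⟨hin.1, hle⟩ : 1 ≤ a ∧ a ≤ n - 1),
          if_pos (show 2 * i % 2 = 0 by omega)]
        have : ((a : ℕ), 2 * i / 2) = (a, i) := by
          rw [Prod.mk.injEq]
          omega
        rw [this]
      have h2 : (J (a, i)).map (fun x => 2 * x) = (J' (a, i)).map (fun x => 2 * x) := by
        rw [← e J, ← e J', h]
      have hinj : Function.Injective (fun x : ℕ => 2 * x) := by
        intro x y hxy
        dsimp at hxy
        omega
      exact Multiset.map_injective hinj h2
    · have han : n = a := by omega
      subst han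
      have e : ∀ JJ : Rig, hatJ n JJ (n, i) = JJ (n, i) := by
        intro JJ
        rw [hatJ_apply, if_neg (by omega : ¬(1 ≤ n ∧ n ≤ n - 1)), if_pos (Or.inl rfl)]
      rw [← e J, ← e J', h]
  · have z1 : J (a, i) = 0 := by
      by_contra hc
      have := hJ _ hc
      dsimp only at this
      omega
    have z2 : J' (a, i) = 0 := by
      by_contra hc
      have := hJ' _ hc
      dsimp only at this
      omega
    rw [z1, z2]

theorem statement16 (n : ℕ) (hn : 3 ≤ n) (lam : ℕ → ℕ) (L : Mat) (hL : supIn n L) :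
    Set.BijOn (fun p : Mat × Rig => (hatM n p.1, hatJ n p.2)) (RCB n lam L)
      (RCv n lam L) ∧
    ∀ p ∈ RCB n lam L,
      ccD n (hatM n p.1) + Jsize (hatJ n p.2) = 2 * (ccB n p.1 + Jsize p.2) := by
  constructor
  · refine ⟨?_, ?_, ?_⟩
    · -- MapsTo
      intro p hp
      obtain ⟨hm, hJm, hcfg, hadm, hrig⟩ := hp
      have vacBnn : ∀ a i, 1 ≤ a → a ≤ n → 0 ≤ vacB n L p.1 a i := by
        intro a i h1 h2
        rcases Nat.eq_zero_or_pos i with hz | hz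
        · rw [hz, vacB_zero]
        · exact hadm a i h1 h2 hz
      have vacDeven : ∀ a i, 1 ≤ a → a ≤ n - 1 → i % 2 = 0 →
          vacD n (hatM n L) (hatM n p.1) a i = 2 * vacB n L p.1 a (i / 2) := by
        intro a i h1 h2 he
        have := Va hn L p.1 hL hm h1 h2 (i / 2)
        rw [show 2 * (i / 2) = i from by omega] at this
        exact this
      refine ⟨?_, ?_, ?_, ?_, ?_, ?_, ?_, ?_⟩
      · -- supIn (n+1)
        intro q hq
        rw [hatM_apply] at hq
        split_ifs at hq with g1 g2 g3
        · have := hm _ hq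
          dsimp only at this
          exact ⟨g1.1, by omega, by omega⟩
        · exact absurd rfl hq
        · have := hm _ hq
          dsimp only at this
          refine ⟨?_, ?_, ?_⟩ <;> rcases g3 with g | g <;> omega
        · exact absurd rfl hq
      · -- supInJ (n+1)
        intro q hq
        rw [hatJ_apply] at hq
        split_ifs at hq with g1 g2 g3
        · rw [Ne, Multiset.map_eq_zero] at hq
          have := hJm _ hq
          dsimp only at this
          exact ⟨g1.1, by omega, by omega⟩
        · exact absurd rfl hq
        · have := hJm _ hq
          dsimp only at this
          refine ⟨?_, ?_, ?_⟩ <;> rcases g3 with g | g <;> omega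
        · exact absurd rfl hq
      · -- configD
        intro b h1 h2
        by_cases hb : b ≤ n - 1
        · rw [E1 hn p.1 hm h1 hb, E3 hn L hL h1 hb]
          unfold hatLam
          rw [if_pos ⟨h1, hb⟩]
          have := hcfg b h1 (by omega)
          linarith
        · by_cases hbn : n = b
          · subst hbn
            rw [E2 hn p.1 hm, E4 hn L hL]
            unfold hatLam
            rw [if_neg (by omega : ¬(1 ≤ n ∧ n ≤ n - 1)), if_pos (Or.inl rfl)]
            exact hcfg n h1 le_rfl
          · have hbn1 : b = n + 1 := by omega
            subst hbn1
            rw [E2' hn p.1 hm, E4' hn L hL]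
            unfold hatLam
            rw [if_neg (by omega : ¬(1 ≤ n + 1 ∧ n + 1 ≤ n - 1)), if_pos (Or.inr rfl)]
            exact hcfg n (by omega) le_rfl
      · -- admD
        intro b i h1 h2 hi
        by_cases hb : b ≤ n - 1
        · by_cases he : i % 2 = 0
          · rw [vacDeven b i h1 hb he]
            have := vacBnn b (i / 2) h1 (by omega)
            linarith
          · have hoddi := Vodd hn L p.1 hL hm h1 hb (show i % 2 = 1 by omega)
            have e1 : 0 ≤ vacD n (hatM n L) (hatM n p.1) b (i - 1) := by
              rw [vacDeven b (i - 1) h1 hb (by omega)]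
              have := vacBnn b ((i - 1) / 2) h1 (by omega)
              linarith
            have e2 : 0 ≤ vacD n (hatM n L) (hatM n p.1) b (i + 1) := by
              rw [vacDeven b (i + 1) h1 hb (by omega)]
              have := vacBnn b ((i + 1) / 2) h1 (by omega)
              linarith
            linarith
        · by_cases hbn : n = b
          · subst hbn
            rw [Vb hn L p.1 hL hm i]
            exact vacBnn n i (by omega) le_rfl
          · have hbn1 : b = n + 1 := by omega
            subst hbn1
            rw [Vb' hn L p.1 hL hm i]
            exact vacBnn n i (by omega) le_rfl
      · -- rigD
        intro b i h1 h2 hi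
        by_cases hb : b ≤ n - 1
        · by_cases he : i % 2 = 0
          · have hM : hatM n p.1 (b, i) = p.1 (b, i / 2) := by
              rw [hatM_apply, if_pos (⟨h1, hb⟩ : 1 ≤ b ∧ b ≤ n - 1), if_pos he]
            have hJ2 : hatJ n p.2 (b, i) = (p.2 (b, i / 2)).map (fun x => 2 * x) := by
              rw [hatJ_apply, if_pos (⟨h1, hb⟩ : 1 ≤ b ∧ b ≤ n - 1), if_pos he]
            have hr := hrig b (i / 2) h1 (by omega) (by omega)
            rw [hM, hJ2]
            constructor
            · rw [Multiset.card_map]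
              exact hr.1
            · intro x hx
              rw [Multiset.mem_map] at hx
              obtain ⟨y, hy, rfl⟩ := hx
              have hh := hr.2 y hy
              refine ⟨by omega, ?_⟩
              rw [vacDeven b i h1 hb he]
              push_cast
              linarith [hh.2]
          · have hJ2 : hatJ n p.2 (b, i) = 0 := by
              rw [hatJ_apply, if_pos (⟨h1, hb⟩ : 1 ≤ b ∧ b ≤ n - 1), if_neg he]
            rw [hJ2]
            constructor
            · simp
            · intro x hx
              simp at hx
        · by_cases hbn : n = b
          · subst hbn
            have hM : hatM n p.1 (n, i) = p.1 (n, i) := by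
              rw [hatM_apply, if_neg (by omega : ¬(1 ≤ n ∧ n ≤ n - 1)), if_pos (Or.inl rfl)]
            have hJ2 : hatJ n p.2 (n, i) = p.2 (n, i) := by
              rw [hatJ_apply, if_neg (by omega : ¬(1 ≤ n ∧ n ≤ n - 1)), if_pos (Or.inl rfl)]
            rw [hM, hJ2, Vb hn L p.1 hL hm i]
            exact hrig n i (by omega) le_rfl hi
          · have hbn1 : b = n + 1 := by omega
            subst hbn1
            have hM : hatM n p.1 (n + 1, i) = p.1 (n, i) := by
              rw [hatM_apply, if_neg (by omega : ¬(1 ≤ n + 1 ∧ n + 1 ≤ n - 1)),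
                if_pos (Or.inr rfl)]
            have hJ2 : hatJ n p.2 (n + 1, i) = p.2 (n, i) := by
              rw [hatJ_apply, if_neg (by omega : ¬(1 ≤ n + 1 ∧ n + 1 ≤ n - 1)),
                if_pos (Or.inr rfl)]
            rw [hM, hJ2, Vb' hn L p.1 hL hm i]
            exact hrig n i (by omega) le_rfl hi
      · -- symmetry
        intro i
        constructor
        · rw [hatM_apply, hatM_apply, if_neg (by omega : ¬(1 ≤ n ∧ n ≤ n - 1)),
            if_pos (Or.inl rfl), if_neg (by omega : ¬(1 ≤ n + 1 ∧ n + 1 ≤ n - 1)),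
            if_pos (Or.inr rfl)]
        · rw [hatJ_apply, hatJ_apply, if_neg (by omega : ¬(1 ≤ n ∧ n ≤ n - 1)),
            if_pos (Or.inl rfl), if_neg (by omega : ¬(1 ≤ n + 1 ∧ n + 1 ≤ n - 1)),
            if_pos (Or.inr rfl)]
      · -- parity
        intro a j h1 h2 hodd
        rw [hatM_apply, if_pos (⟨h1, h2⟩ : 1 ≤ a ∧ a ≤ n - 1), if_neg (by omega)]
      · -- evenness
        intro a i h1 h2 x hx
        rw [hatJ_apply, if_pos (⟨h1, h2⟩ : 1 ≤ a ∧ a ≤ n - 1)] at hx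
        by_cases he : i % 2 = 0
        · rw [if_pos he, Multiset.mem_map] at hx
          obtain ⟨y, hy, rfl⟩ := hx
          omega
        · rw [if_neg he] at hx
          simp at hx
    · -- InjOn
      intro p hp q hq heq
      simp only [Prod.mk.injEq] at heq
      obtain ⟨e1, e2⟩ := heq
      obtain ⟨hm, hJm, _, _, _⟩ := hp
      obtain ⟨hm', hJm', _, _, _⟩ := hq
      exact Prod.ext (hatM_inj hn hm hm' e1) (hatJ_inj hn hJm hJm' e2)
    · -- SurjOn
      intro ph hph
      obtain ⟨hsup, hsupJ, hcfg, hadm, hrig, hsym, hpar, heven⟩ := hph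
      set m' : Mat := invM n ph.1 with hm'def
      set J' : Rig := invJ n ph.2 with hJ'def
      have hoddJ : ∀ a j, 1 ≤ a → a ≤ n - 1 → j % 2 = 1 → ph.2 (a, j) = 0 := by
        intro a j h1 h2 hj
        have hr := hrig a j h1 (by omega) (by omega)
        have h0 : ph.1 (a, j) = 0 := hpar a j h1 h2 hj
        have := hr.1
        rw [h0, Nat.le_zero, Multiset.card_eq_zero] at this
        exact this
      have hkeyM : hatM n m' = ph.1 :=
        hatM_invM hn ph.1 hsup (fun i => (hsym i).1) hpar
      have hkeyJ : hatJ n J' = ph.2 :=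
        hatJ_invJ hn ph.2 hsupJ (fun i => (hsym i).2) heven hoddJ
      have hm'sup : supIn n m' := by
        intro q hq
        rw [hm'def, invM_apply] at hq
        split_ifs at hq with g1 g2
        · have := hsup _ hq
          dsimp only at this
          exact ⟨g1.1, by omega, by omega⟩
        · have := hsup _ hq
          dsimp only at this
          exact ⟨by omega, by omega, this.2.2⟩
        · exact absurd rfl hq
      have hJ'sup : supInJ n J' := by
        intro q hq
        rw [hJ'def, invJ_apply] at hq
        split_ifs at hq with g1 g2
        · rw [Ne, Multiset.map_eq_zero] at hq
          have := hsupJ _ hq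
          dsimp only at this
          exact ⟨g1.1, by omega, by omega⟩
        · have := hsupJ _ hq
          dsimp only at this
          exact ⟨by omega, by omega, this.2.2⟩
        · exact absurd rfl hq
      refine ⟨(m', J'), ⟨hm'sup, hJ'sup, ?_, ?_, ?_⟩, ?_⟩
      · -- configB
        intro a h1 h2
        by_cases hb : a ≤ n - 1
        · have hD := hcfg a h1 (by omega)
          rw [← hkeyM, E1 hn m' hm'sup h1 hb, E3 hn L hL h1 hb] at hD
          unfold hatLam at hD
          rw [if_pos ⟨h1, hb⟩] at hD
          linarith
        · have han : n = a := by omega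
          subst han
          have hD := hcfg n h1 (by omega)
          rw [← hkeyM, E2 hn m' hm'sup, E4 hn L hL] at hD
          unfold hatLam at hD
          rw [if_neg (by omega : ¬(1 ≤ n ∧ n ≤ n - 1)), if_pos (Or.inl rfl)] at hD
          exact hD
      · -- admB
        intro a i h1 h2 hi
        by_cases hb : a ≤ n - 1
        · have := hadm a (2 * i) h1 (by omega) (by omega)
          rw [← hkeyM, Va hn L m' hL hm'sup h1 hb i] at this
          linarith
        · have han : n = a := by omega
          subst han
          have := hadm n i h1 (by omega) hi
          rw [← hkeyM, Vb hn L m' hL hm'sup i] at this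
          exact this
      · -- rigB
        intro a i h1 h2 hi
        by_cases hb : a ≤ n - 1
        · have hJv : J' (a, i) = (ph.2 (a, 2 * i)).map (fun x => x / 2) := by
            rw [hJ'def, invJ_apply, if_pos (⟨h1, hb⟩ : 1 ≤ a ∧ a ≤ n - 1)]
          have hMv : m' (a, i) = ph.1 (a, 2 * i) := by
            rw [hm'def, invM_apply, if_pos (⟨h1, hb⟩ : 1 ≤ a ∧ a ≤ n - 1)]
          have hr := hrig a (2 * i) h1 (by omega) (by omega)
          rw [hJv, hMv]
          constructor
          · rw [Multiset.card_map]
            exact hr.1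
          · intro x hx
            rw [Multiset.mem_map] at hx
            obtain ⟨y, hy, rfl⟩ := hx
            have hh := hr.2 y hy
            have hyev : y % 2 = 0 := heven a (2 * i) h1 hb y hy
            have hvac := hh.2
            rw [← hkeyM, Va hn L m' hL hm'sup h1 hb i] at hvac
            refine ⟨by omega, ?_⟩
            have hcast : (y : ℚ) = 2 * ((y / 2 : ℕ) : ℚ) := by
              have : y = 2 * (y / 2) := by omega
              exact_mod_cast this
            rw [hcast] at hvac
            linarith
        · have han : n = a := by omega
          subst han
          have hJv : J' (n, i) = ph.2 (n, i) := by
            rw [hJ'def, invJ_apply, if_neg (by omega : ¬(1 ≤ n ∧ n ≤ n - 1)), if_pos rfl]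
          have hMv : m' (n, i) = ph.1 (n, i) := by
            rw [hm'def, invM_apply, if_neg (by omega : ¬(1 ≤ n ∧ n ≤ n - 1)), if_pos rfl]
          have hr := hrig n i h1 (by omega) hi
          rw [hJv, hMv]
          constructor
          · exact hr.1
          · intro x hx
            have hh := hr.2 x hx
            refine ⟨hh.1, ?_⟩
            have hvac := hh.2
            rw [← hkeyM, Vb hn L m' hL hm'sup i] at hvac
            exact hvac
      · -- image equality
        dsimp only
        rw [hkeyM, hkeyJ]
  · -- cocharge
    intro p hp
    obtain ⟨hm, hJm, _, _, _⟩ := hp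
    rw [CC hn p.1 hm, JS hn p.2 hJm]
    ring

end Stmt16
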